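/- Let Γ be a graph product graph of finite cyclic groups that is a disjoint union of two induced subgraphs Γ₁ and Γ₂ (no edges between them). If Cay(G(Γ₁)) and Cay(G(Γ₂)) are planar, then Cay(G(Γ)) is planar. -/

import Mathlib

/-- `G` contains a subdivision of `H` as a subgraph: there are branch vertices (an injection
`f` of the vertices of `H` into `G`) and, for each edge of `H`, a path in `G` between the
corresponding branch vertices, such that these paths are internally disjoint from each other
and from the set of branch vertices. -/
def ContainsSubdivision {V W : Type} (G : SimpleGraph V) (H : SimpleGraph W) : Prop :=
  ∃ (f : W ↪ V) (p : ∀ {a b : W}, H.Adj a b → G.Walk (f a) (f b)),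
    (∀ {a b : W} (h : H.Adj a b), (p h).IsPath) ∧
    (∀ {a b : W} (h : H.Adj a b), p h.symm = (p h).reverse) ∧
    (∀ {a b : W} (h : H.Adj a b) (c : W), f c ∈ (p h).support → c = a ∨ c = b) ∧
    (∀ {a b c d : W} (h₁ : H.Adj a b) (h₂ : H.Adj c d), s(a, b) ≠ s(c, d) →
      ∀ x, x ∈ (p h₁).support → x ∈ (p h₂).support → ∃ w : W, x = f w)

/-- Planarity, via the Kuratowski (Dirac–Schuster in the infinite case) characterization:
a simple graph is planar iff it contains no subdivision of `K₅` or `K₃,₃` as a subgraph. -/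
def IsPlanar {V : Type} (G : SimpleGraph V) : Prop :=
  ¬ ContainsSubdivision G (SimpleGraph.completeGraph (Fin 5)) ∧
  ¬ ContainsSubdivision G (completeBipartiteGraph (Fin 3) (Fin 3))

/-- The (simple, undirected) Cayley graph of a group w.r.t. a generating set. -/
def cayleyGraph (G : Type) [Group G] (S : Set G) : SimpleGraph G :=
  SimpleGraph.fromRel (fun g h => ∃ s ∈ S, h = g * s)

/-- The (simple, undirected) Cayley graph of an additive group w.r.t. a generating set. -/
def cayleyGraphAdd (G : Type) [AddGroup G] (S : Set G) : SimpleGraph G :=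
  SimpleGraph.fromRel (fun g h => ∃ s ∈ S, h = g + s)

open scoped commutatorElement in
/-- The relations of the graph product of finite cyclic groups over the labelled graph `Γ`:
the vertex group at `v` is cyclic of order `o v`, and generators of adjacent vertex groups
commute. -/
def graphProductRels {V : Type} (Γ : SimpleGraph V) (o : V → ℕ) : Set (FreeGroup V) :=
  {r | (∃ v, r = FreeGroup.of v ^ o v) ∨
       (∃ v w, Γ.Adj v w ∧ r = ⁅FreeGroup.of v, FreeGroup.of w⁆)}

/-- The graph product of finite cyclic groups over the labelled graph `Γ`. -/
def GraphProduct {V : Type} (Γ : SimpleGraph V) (o : V → ℕ) : Type :=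
  PresentedGroup (graphProductRels Γ o)

instance {V : Type} (Γ : SimpleGraph V) (o : V → ℕ) : Group (GraphProduct Γ o) :=
  inferInstanceAs (Group (PresentedGroup (graphProductRels Γ o)))

/-- The Cayley graph of the graph product `G(Γ)` with respect to the standard generators. -/
def cayleyGraphGP {V : Type} (Γ : SimpleGraph V) (o : V → ℕ) : SimpleGraph (GraphProduct Γ o) :=
  cayleyGraph (GraphProduct Γ o) (Set.range (PresentedGroup.of : V → GraphProduct Γ o))

/-- The cycle graph `C_k` on `ZMod k` (`k ≥ 3`). -/
def cycleG (k : ℕ) : SimpleGraph (ZMod k) :=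
  SimpleGraph.fromRel (fun i j => j = i + 1)

/-- A group is finitely presented. -/
def IsFinitelyPresented (G : Type) [Group G] : Prop :=
  ∃ (n : ℕ) (rels : Set (FreeGroup (Fin n))), rels.Finite ∧ Nonempty (G ≃* PresentedGroup rels)



namespace Stmt13Aux
open Monoid Monoid.CoprodI

section WordSection
variable {ι : Type} [DecidableEq ι] {M : ι → Type} [∀ i, Group (M i)] [∀ i, DecidableEq (M i)]

/-- the normal form word of an element of a free product -/
def wd (g : CoprodI M) : Word M := Word.equiv g

lemma wd_injective : Function.Injective (wd (M := M)) := (Word.equiv).injective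

lemma prod_wd (g : CoprodI M) : (wd g).prod = g := (Word.equiv).symm_apply_apply g

lemma wd_one : wd (1 : CoprodI M) = Word.empty := by
  have : ((1 : CoprodI M) • (Word.empty : Word M)) = Word.empty := one_smul _ _
  simpa [wd, Word.equiv] using this

lemma wd_smul (t g : CoprodI M) : wd (t * g) = t • wd g := by
  show (t * g) • (Word.empty : Word M) = t • (g • Word.empty)
  rw [mul_smul]

lemma smul_toList_of_fstIdx_ne {i : ι} (m : M i) (hm : m ≠ 1) (w : Word M)
    (hw : w.fstIdx ≠ some i) :
    ((of m • w : Word M)).toList = ⟨i, m⟩ :: w.toList := by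
  rw [← Word.cons_eq_smul (h1 := hw) (h2 := hm)]
  rfl

/-- decompose a word with given head as a smul -/
lemma exists_tail_word {i : ι} {h : M i} {t : List (Σ i, M i)} (w : Word M)
    (hw : w.toList = ⟨i, h⟩ :: t) :
    ∃ w' : Word M, w'.toList = t ∧ w'.fstIdx ≠ some i ∧ h ≠ 1 ∧ w = of h • w' := by
  have hne : h ≠ 1 := w.ne_one ⟨i, h⟩ (by rw [hw]; exact List.mem_cons_self)
  have hchain := w.chain_ne
  rw [hw] at hchain
  have hno : ∀ l ∈ t, Sigma.snd l ≠ 1 := by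
    intro l hl; exact w.ne_one l (by rw [hw]; exact List.mem_cons_of_mem _ hl)
  have hfst : (Word.fstIdx (⟨t, hno, hchain.tail⟩ : Word M)) ≠ some i := by
    unfold Word.fstIdx
    cases t with
    | nil => simp
    | cons a t' =>
      simp only [List.head?_cons, Option.map_some]
      have := (List.isChain_cons_cons.mp hchain).1
      intro hcon
      exact this (by simpa using hcon.symm)
  refine ⟨⟨t, hno, hchain.tail⟩, rfl, hfst, hne, ?_⟩
  have hwc : w = Word.cons h ⟨t, hno, hchain.tail⟩ hfst hne := by
    apply Word.ext
    simpa [Word.cons] using hw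
  rw [hwc, Word.cons_eq_smul]

lemma smul_toList_cancel {i : ι} (m : M i) {h : M i} {t : List (Σ i, M i)} (w : Word M)
    (hw : w.toList = ⟨i, h⟩ :: t) (hmh : m * h = 1) :
    ((of m • w : Word M)).toList = t := by
  obtain ⟨w', hw't, _, hne, rfl⟩ := exists_tail_word w hw
  rw [← mul_smul, ← map_mul, hmh, map_one, one_smul]
  exact hw't

lemma smul_toList_merge {i : ι} (m : M i) {h : M i} {t : List (Σ i, M i)} (w : Word M)
    (hw : w.toList = ⟨i, h⟩ :: t) (hmh : m * h ≠ 1) :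
    ((of m • w : Word M)).toList = ⟨i, m * h⟩ :: t := by
  obtain ⟨w', hw't, hfst, hne, rfl⟩ := exists_tail_word w hw
  rw [← mul_smul, ← map_mul]
  rw [smul_toList_of_fstIdx_ne _ hmh _ hfst, hw't]

lemma wd_of {i : ι} (m : M i) (hm : m ≠ 1) : (wd (of m)).toList = [⟨i, m⟩] := by
  have : wd (of m) = of m • wd 1 := by rw [← wd_smul, mul_one]
  rw [this, wd_one]
  rw [smul_toList_of_fstIdx_ne m hm _ (by simp [Word.fstIdx, Word.empty])]
  rfl

end WordSection

section InHSection
variable {ι : Type} {M : ι → Type} [∀ i, Group (M i)]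

/-- membership in the image of a factor -/
def inH (i : ι) (x : CoprodI M) : Prop := ∃ m : M i, x = of m

lemma inH_one (i : ι) : inH i (1 : CoprodI M) := ⟨1, (map_one _).symm⟩

lemma inH_inv {i : ι} {x : CoprodI M} (h : inH i x) : inH i x⁻¹ := by
  obtain ⟨m, rfl⟩ := h; exact ⟨m⁻¹, by rw [map_inv]⟩

lemma inH_mul {i : ι} {x y : CoprodI M} (hx : inH i x) (hy : inH i y) : inH i (x * y) := by
  obtain ⟨m, rfl⟩ := hx; obtain ⟨m', rfl⟩ := hy; exact ⟨m * m', by rw [map_mul]⟩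

end InHSection

section WordSection2
variable {ι : Type} [DecidableEq ι] {M : ι → Type} [∀ i, Group (M i)] [∀ i, DecidableEq (M i)]

lemma inH_toList {i : ι} {x : CoprodI M} (h : inH i x) :
    (wd x).toList = [] ∨ ∃ m : M i, m ≠ 1 ∧ (wd x).toList = [⟨i, m⟩] := by
  obtain ⟨m, rfl⟩ := h
  by_cases hm : m = 1
  · left; rw [hm, map_one, wd_one]; rfl
  · right; exact ⟨m, hm, wd_of m hm⟩

lemma eq_one_of_toList_nil {x : CoprodI M} (h : (wd x).toList = []) : x = 1 := by
  have : wd x = Word.empty := Word.ext h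
  rw [← prod_wd x, this, Word.prod_empty]

lemma of_toList_singleton {i : ι} {m : M i} {x : CoprodI M} (h : (wd x).toList = [⟨i, m⟩]) :
    x = of m := by
  have hm : m ≠ 1 := (wd x).ne_one ⟨i, m⟩ (by rw [h]; exact List.mem_cons_self)
  rw [← prod_wd x]
  have hwc : wd x = Word.cons m Word.empty (by simp [Word.fstIdx, Word.empty]) hm := by
    apply Word.ext; simpa [Word.cons] using h
  rw [hwc]; exact (Word.prod_cons i m Word.empty hm _).trans (by rw [Word.prod_empty, mul_one])

/-- uniqueness of factor -/
lemma inH_unique {i j : ι} {x : CoprodI M} (hi : inH i x) (hj : inH j x) (hij : i ≠ j) :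
    x = 1 := by
  rcases inH_toList hi with h | ⟨m, hm, h⟩
  · exact eq_one_of_toList_nil h
  · rcases inH_toList hj with h' | ⟨m', hm', h'⟩
    · exact eq_one_of_toList_nil h'
    · rw [h] at h'
      injection h' with h1 _
      exact absurd (congrArg Sigma.fst h1) hij

/-- word of a two-letter product -/
lemma wd_two {i j : ι} (hij : i ≠ j) {x y : CoprodI M} (hx : inH i x) (hy : inH j y)
    (hx1 : x ≠ 1) (hy1 : y ≠ 1) :
    ∃ (m : M i) (m' : M j), m ≠ 1 ∧ m' ≠ 1 ∧ x = of m ∧ y = of m' ∧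
      (wd (x * y)).toList = [⟨i, m⟩, ⟨j, m'⟩] := by
  obtain ⟨m, rfl⟩ := hx; obtain ⟨m', rfl⟩ := hy
  have hm : m ≠ 1 := fun h => hx1 (by rw [h, map_one])
  have hm' : m' ≠ 1 := fun h => hy1 (by rw [h, map_one])
  refine ⟨m, m', hm, hm', rfl, rfl, ?_⟩
  rw [wd_smul]
  rw [smul_toList_of_fstIdx_ne m hm _ (by
    rw [Word.fstIdx, wd_of m' hm']
    simpa using Ne.symm hij), wd_of m' hm']

/-- a reduced two-letter product is in no factor -/
lemma two_not_inH {i j : ι} (hij : i ≠ j) {x y : CoprodI M} (hx : inH i x) (hy : inH j y)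
    (hx1 : x ≠ 1) (hy1 : y ≠ 1) (k : ι) : ¬ inH k (x * y) := by
  intro hk
  obtain ⟨m, m', _, _, _, _, hlist⟩ := wd_two hij hx hy hx1 hy1
  rcases inH_toList hk with h | ⟨n, hn, h⟩ <;> rw [hlist] at h <;> simp at h

/-- cancellation in two-letter products -/
lemma two_eq_two {i j i' j' : ι} (hij : i ≠ j) (hij' : i' ≠ j')
    {x y x' y' : CoprodI M} (hx : inH i x) (hy : inH j y) (hx' : inH i' x') (hy' : inH j' y')
    (hx1 : x ≠ 1) (hy1 : y ≠ 1) (hx1' : x' ≠ 1) (hy1' : y' ≠ 1)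
    (heq : x * y = x' * y') : i = i' ∧ j = j' ∧ x = x' ∧ y = y' := by
  obtain ⟨m, m', _, _, hxm, hym, hlist⟩ := wd_two hij hx hy hx1 hy1
  obtain ⟨n, n', _, _, hxn, hyn, hlist'⟩ := wd_two hij' hx' hy' hx1' hy1'
  rw [heq, hlist'] at hlist
  -- hlist : [⟨i', n⟩, ⟨j', n'⟩] = [⟨i, m⟩, ⟨j, m'⟩]
  injection hlist with h1 hrest
  injection hrest with h2 _
  obtain ⟨hii, hmm⟩ := Sigma.mk.inj_iff.mp h1
  obtain ⟨hjj, hmm'⟩ := Sigma.mk.inj_iff.mp h2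
  subst hii; subst hjj
  refine ⟨rfl, rfl, ?_, ?_⟩
  · rw [hxm, hxn, eq_of_heq hmm]
  · rw [hym, hyn, eq_of_heq hmm']

end WordSection2
end Stmt13Aux

-- graph layer, to be appended
namespace Stmt13Aux
open SimpleGraph

/-- crossing lemma: if every edge leaving `Q` exits at `z`, any walk from inside to outside
visits `z`. -/
lemma crossing {V : Type} {G : SimpleGraph V} {Q : V → Prop} {z : V}
    (hb : ∀ x y, G.Adj x y → Q x → ¬ Q y → y = z) :
    ∀ {u v : V} (w : G.Walk u v), Q u → ¬ Q v → z ∈ w.support := by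
  intro u v w
  induction w with
  | nil => intro h h'; exact absurd h h'
  | @cons a b c hadj p ih =>
    intro hu hv
    by_cases hQ : Q b
    · exact List.mem_cons_of_mem _ (ih hQ hv)
    · have : b = z := hb a b hadj hu hQ
      exact List.mem_cons_of_mem _ (this ▸ p.start_mem_support)

/-- transport of subdivisions along a graph isomorphism -/
lemma containsSubdivision_map {V V' W : Type} {G : SimpleGraph V} {G' : SimpleGraph V'}
    (e : G ≃g G') {H : SimpleGraph W} (hc : ContainsSubdivision G H) :
    ContainsSubdivision G' H := by
  obtain ⟨f, p, hpath, hrev, hbranch, hdisj⟩ := hc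
  have hinj : Function.Injective (e : V → V') := e.toEquiv.injective
  refine ⟨f.trans e.toEquiv.toEmbedding, fun {a b} h => ((p h).map e.toHom), ?_, ?_, ?_, ?_⟩
  · intro a b h
    exact (SimpleGraph.Walk.map_isPath_of_injective hinj (hpath h))
  · intro a b h
    show SimpleGraph.Walk.map _ (p h.symm) = (SimpleGraph.Walk.map _ (p h)).reverse
    rw [hrev h, ← SimpleGraph.Walk.reverse_map]
  · intro a b h c hc
    dsimp only at hc
    erw [SimpleGraph.Walk.support_map] at hc
    obtain ⟨x, hx, hex⟩ := List.mem_map.mp hc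
    have hfc : (f c : V) = x := hinj (by simpa using hex.symm)
    exact hbranch h c (by rw [hfc]; exact hx)
  · intro a b c d h₁ h₂ hne x hx₁ hx₂
    dsimp only at hx₁ hx₂
    erw [SimpleGraph.Walk.support_map] at hx₁ hx₂
    obtain ⟨y₁, hy₁, hey₁⟩ := List.mem_map.mp hx₁
    obtain ⟨y₂, hy₂, hey₂⟩ := List.mem_map.mp hx₂
    have hyy : y₁ = y₂ := hinj (hey₁.trans hey₂.symm)
    obtain ⟨w, hw⟩ := hdisj h₁ h₂ hne y₁ hy₁ (hyy ▸ hy₂)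
    exact ⟨w, by rw [← hey₁, hw]; rfl⟩

/-- a group isomorphism induces an isomorphism of Cayley graphs -/
def cayleyIso {G G' : Type} [Group G] [Group G'] (e : G ≃* G') (S : Set G) :
    cayleyGraph G S ≃g cayleyGraph G' (e '' S) where
  toEquiv := e.toEquiv
  map_rel_iff' := by
    intro x y
    show (cayleyGraph G' (e '' S)).Adj (e x) (e y) ↔ (cayleyGraph G S).Adj x y
    unfold cayleyGraph
    rw [SimpleGraph.fromRel_adj, SimpleGraph.fromRel_adj]
    constructor
    · rintro ⟨hne, (⟨s, ⟨s₀, hs₀, rfl⟩, hs⟩ | ⟨s, ⟨s₀, hs₀, rfl⟩, hs⟩)⟩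
      · refine ⟨fun h => hne (by rw [h]), Or.inl ⟨s₀, hs₀, ?_⟩⟩
        apply e.injective; rw [hs, map_mul]
      · refine ⟨fun h => hne (by rw [h]), Or.inr ⟨s₀, hs₀, ?_⟩⟩
        apply e.injective; rw [hs, map_mul]
    · rintro ⟨hne, (⟨s, hs₀, rfl⟩ | ⟨s, hs₀, rfl⟩)⟩
      · exact ⟨fun h => hne (e.injective h), Or.inl ⟨e s, ⟨s, hs₀, rfl⟩, by rw [map_mul]⟩⟩
      · exact ⟨fun h => hne (e.injective h), Or.inr ⟨e s, ⟨s, hs₀, rfl⟩, by rw [map_mul]⟩⟩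

end Stmt13Aux

namespace Stmt13Aux
open Monoid Monoid.CoprodI SimpleGraph

lemma suffix_ne_cons {α : Type} {l t : List α} (h : l <:+ t) (a : α) : l ≠ a :: t := by
  intro he
  have := h.length_le
  rw [he] at this
  simp at this

lemma getLast?_cons_of_ne_nil {α : Type} {t : List α} (a : α) (h : t ≠ []) :
    (a :: t).getLast? = t.getLast? := by
  cases t with
  | nil => exact absurd rfl h
  | cons b l => exact List.getLast?_cons_cons

section CoprodGraph

variable {ι : Type} [DecidableEq ι] {M : ι → Type} [∀ i, Group (M i)] [∀ i, DecidableEq (M i)]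
variable {X : SimpleGraph (Monoid.CoprodI M)}
variable (hX : ∀ x y, X.Adj x y → ∃ (i : ι) (m : M i), m ≠ 1 ∧ y = x * Monoid.CoprodI.of m)

include hX

/-- Cut-vertex lemma: if `u⁻¹v` is in no factor, some vertex `z ∉ {u,v}` lies on every
`u`-`v` walk. -/
lemma cut_lemma {u v : CoprodI M} (huv : u ≠ v) (hH : ∀ i, ¬ inH i (u⁻¹ * v)) :
    ∃ z, z ≠ u ∧ z ≠ v ∧ ∀ w : X.Walk u v, z ∈ w.support := by
  have hg1 : u⁻¹ * v ≠ 1 := fun h => huv (inv_mul_eq_one.mp h)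
  rcases hL : (wd (u⁻¹ * v)).toList with _ | ⟨⟨i₀, c⟩, rest⟩
  · exact absurd (eq_one_of_toList_nil hL) hg1
  have hc1 : c ≠ 1 := (wd (u⁻¹ * v)).ne_one ⟨i₀, c⟩ (by rw [hL]; exact List.mem_cons_self)
  have hrest : rest ≠ [] := by
    rintro rfl
    exact hH i₀ ⟨c, of_toList_singleton hL⟩
  set r : CoprodI M := (of c)⁻¹ * (u⁻¹ * v) with hrdef
  have hr : (wd r).toList = rest := by
    rw [hrdef, ← map_inv, wd_smul]
    exact smul_toList_cancel c⁻¹ _ hL (inv_mul_cancel c)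
  have hrne : r ≠ 1 := by
    intro h
    rw [h, wd_one] at hr
    exact hrest hr.symm
  refine ⟨v * r⁻¹, ?_, ?_, ?_⟩
  · -- z ≠ u
    intro h
    have : u⁻¹ * v = r := by rw [← h]; group
    rw [this] at hL
    rw [hr] at hL
    exact suffix_ne_cons (List.suffix_refl rest) _ hL
  · -- z ≠ v
    intro h
    have : r⁻¹ = 1 := by
      have := mul_eq_left.mp h
      exact this
    exact hrne (inv_eq_one.mp this)
  · -- every walk visits z
    intro w
    have hb : ∀ x y, X.Adj x y →
        (rest <:+ (wd (x⁻¹ * v)).toList ∧ rest ≠ (wd (x⁻¹ * v)).toList) →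
        ¬ (rest <:+ (wd (y⁻¹ * v)).toList ∧ rest ≠ (wd (y⁻¹ * v)).toList) →
        y = v * r⁻¹ := by
      intro x y hadj hQx hQy
      obtain ⟨i, m, hm, rfl⟩ := hX x y hadj
      have hyv : wd (((x * of m))⁻¹ * v) = of m⁻¹ • wd (x⁻¹ * v) := by
        rw [mul_inv_rev, mul_assoc, ← map_inv, wd_smul]
      rcases hw1 : (wd (x⁻¹ * v)).toList with _ | ⟨⟨k, h⟩, t⟩
      · rw [hw1] at hQx
        have : rest = [] := List.eq_nil_of_suffix_nil hQx.1
        exact absurd this hrest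
      · by_cases hk : i = k
        · subst hk
          by_cases hmh : m⁻¹ * h = 1
          · -- cancellation
            have hnew : (wd ((x * of m)⁻¹ * v)).toList = t := by
              rw [hyv]; exact smul_toList_cancel m⁻¹ _ hw1 hmh
            have hsub : rest <:+ t := by
              rcases List.suffix_cons_iff.mp (hw1 ▸ hQx.1) with h' | h'
              · exact absurd h' (hw1 ▸ hQx.2)
              · exact h'
            have : rest = t := by
              by_contra hne
              exact hQy ⟨hnew ▸ hsub, fun hcon => hne (hcon.trans hnew)⟩
            subst this
            have : (x * of m)⁻¹ * v = r := by
              apply wd_injective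
              apply Monoid.CoprodI.Word.ext
              rw [hnew, hr]
            calc x * of m = v * ((x * of m)⁻¹ * v)⁻¹ := by group
            _ = v * r⁻¹ := by rw [this]
          · -- merge
            have hnew : (wd ((x * of m)⁻¹ * v)).toList = ⟨i, m⁻¹ * h⟩ :: t := by
              rw [hyv]; exact smul_toList_merge m⁻¹ _ hw1 hmh
            have hsub : rest <:+ t := by
              rcases List.suffix_cons_iff.mp (hw1 ▸ hQx.1) with h' | h'
              · exact absurd h' (hw1 ▸ hQx.2)
              · exact h'
            exact absurd ⟨hnew ▸ List.suffix_cons_iff.mpr (Or.inr hsub),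
              hnew ▸ suffix_ne_cons hsub _⟩ hQy
        · -- prepended letter
          have hfst : (wd (x⁻¹ * v)).fstIdx ≠ some i := by
            rw [Word.fstIdx, hw1]
            simpa using fun hcon => hk hcon.symm
          have hnew : (wd ((x * of m)⁻¹ * v)).toList = ⟨i, m⁻¹⟩ :: (wd (x⁻¹ * v)).toList := by
            rw [hyv]; exact smul_toList_of_fstIdx_ne m⁻¹ (inv_ne_one.mpr hm) _ hfst
          refine absurd ⟨hnew ▸ List.suffix_cons_iff.mpr (Or.inr hQx.1), ?_⟩ hQy
          rw [hnew]
          exact suffix_ne_cons hQx.1 _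
    have hQu : rest <:+ (wd (u⁻¹ * v)).toList ∧ rest ≠ (wd (u⁻¹ * v)).toList := by
      rw [hL]
      exact ⟨List.suffix_cons_iff.mpr (Or.inr (List.suffix_refl _)),
        suffix_ne_cons (List.suffix_refl rest) _⟩
    have hQv : ¬ (rest <:+ (wd (v⁻¹ * v)).toList ∧ rest ≠ (wd (v⁻¹ * v)).toList) := by
      rw [inv_mul_cancel, wd_one]
      rintro ⟨h1, h2⟩
      exact hrest (List.eq_nil_of_suffix_nil h1)
    have hz := crossing hb w hQu hQv
    -- z ∈ support, and z satisfies z⁻¹ * v = r hence z = v * r⁻¹... crossing gives exactly z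
    exact hz

/-- Excursion lemma: a path between two elements of a common left coset of a factor stays in
that coset. -/
lemma excursion {u v : CoprodI M} (p : X.Walk u v) (hp : p.IsPath) (i : ι)
    (hi : inH i (u⁻¹ * v)) : ∀ x ∈ p.support, inH i (u⁻¹ * x) := by
  induction p with
  | nil =>
    intro x hx
    rw [Walk.mem_support_nil_iff.mp hx, inv_mul_cancel]
    exact inH_one i
  | @cons u b v hadj p' ih =>
    obtain ⟨j, m, hm, rfl⟩ := hX u b hadj
    rw [Walk.cons_isPath_iff] at hp
    by_cases hij : j = i
    · subst hij
      have hub : inH j (u⁻¹ * (u * of m)) := ⟨m, by group⟩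
      have hbv : inH j ((u * of m)⁻¹ * v) := by
        have : (u * of m)⁻¹ * v = (u⁻¹ * (u * of m))⁻¹ * (u⁻¹ * v) := by group
        rw [this]
        exact inH_mul (inH_inv hub) hi
      intro x hx
      rw [Walk.support_cons] at hx
      rcases List.mem_cons.mp hx with rfl | hx'
      · rw [inv_mul_cancel]; exact inH_one j
      · have := ih hp.1 hbv x hx'
        have heq : u⁻¹ * x = (u⁻¹ * (u * of m)) * ((u * of m)⁻¹ * x) := by group
        rw [heq]
        exact inH_mul hub this
    · -- the walk would have to return to u, contradicting path property
      exfalso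
      have hQb : ∃ m' : M j, (wd (((u * of m))⁻¹ * u)).toList.getLast? = some ⟨j, m'⟩ := by
        have : (u * of m)⁻¹ * u = of m⁻¹ := by
          rw [mul_inv_rev, mul_assoc, ← map_inv]
          group
        rw [this, wd_of m⁻¹ (inv_ne_one.mpr hm)]
        exact ⟨m⁻¹, rfl⟩
      have hQv : ¬ ∃ m' : M j, (wd (v⁻¹ * u)).toList.getLast? = some ⟨j, m'⟩ := by
        rintro ⟨m', hm'⟩
        have : inH i (v⁻¹ * u) := by
          have : v⁻¹ * u = (u⁻¹ * v)⁻¹ := by group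
          rw [this]; exact inH_inv hi
        rcases inH_toList this with h | ⟨n, hn, h⟩
        · rw [h] at hm'; simp at hm'
        · rw [h] at hm'
          simp only [List.getLast?_singleton, Option.some.injEq] at hm'
          injection hm' with h1 _
          exact hij h1.symm
      have hb : ∀ x y, X.Adj x y →
          (∃ m' : M j, (wd (x⁻¹ * u)).toList.getLast? = some ⟨j, m'⟩) →
          ¬ (∃ m' : M j, (wd (y⁻¹ * u)).toList.getLast? = some ⟨j, m'⟩) →
          y = u := by
        intro x y hadj' hQx hQy
        obtain ⟨k, n, hn, rfl⟩ := hX x y hadj'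
        have hyu : wd ((x * of n)⁻¹ * u) = of n⁻¹ • wd (x⁻¹ * u) := by
          rw [mul_inv_rev, mul_assoc, ← map_inv, wd_smul]
        rcases hw1 : (wd (x⁻¹ * u)).toList with _ | ⟨⟨k', h⟩, t⟩
        · obtain ⟨m', hm'⟩ := hQx
          rw [hw1] at hm'; simp at hm'
        · by_cases hk : k = k'
          · subst hk
            by_cases hnh : n⁻¹ * h = 1
            · have hnew : (wd ((x * of n)⁻¹ * u)).toList = t := by
                rw [hyu]; exact smul_toList_cancel n⁻¹ _ hw1 hnh
              cases ht : t with
              | nil =>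
                rw [ht] at hnew
                have : (x * of n)⁻¹ * u = 1 := eq_one_of_toList_nil hnew
                calc x * of n = u * ((x * of n)⁻¹ * u)⁻¹ := by group
                _ = u := by rw [this]; group
              | cons d t' =>
                exfalso
                apply hQy
                obtain ⟨m', hm'⟩ := hQx
                rw [hw1, ht, getLast?_cons_of_ne_nil _ (by simp)] at hm'
                rw [hnew, ht]
                exact ⟨m', hm'⟩
            · have hnew : (wd ((x * of n)⁻¹ * u)).toList = ⟨k, n⁻¹ * h⟩ :: t := by
                rw [hyu]; exact smul_toList_merge n⁻¹ _ hw1 hnh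
              exfalso
              apply hQy
              obtain ⟨m', hm'⟩ := hQx
              cases ht : t with
              | nil =>
                rw [hw1, ht] at hm'
                simp only [List.getLast?_singleton, Option.some.injEq] at hm'
                injection hm' with h1 h2
                subst h1
                rw [hnew, ht]
                exact ⟨n⁻¹ * h, by simp⟩
              | cons d t' =>
                rw [hw1, ht, getLast?_cons_of_ne_nil _ (by simp)] at hm'
                rw [hnew, ht, getLast?_cons_of_ne_nil _ (by simp)]
                exact ⟨m', hm'⟩
          · have hfst : (wd (x⁻¹ * u)).fstIdx ≠ some k := by
              rw [Word.fstIdx, hw1]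
              simpa using fun hcon => hk hcon.symm
            have hnew : (wd ((x * of n)⁻¹ * u)).toList =
                ⟨k, n⁻¹⟩ :: (wd (x⁻¹ * u)).toList := by
              rw [hyu]; exact smul_toList_of_fstIdx_ne n⁻¹ (inv_ne_one.mpr hn) _ hfst
            exfalso
            apply hQy
            obtain ⟨m', hm'⟩ := hQx
            rw [hnew, getLast?_cons_of_ne_nil _ (by rw [hw1]; simp)]
            exact ⟨m', hm'⟩
      have := crossing hb p' hQb hQv
      exact hp.2 this

end CoprodGraph
end Stmt13Aux

namespace Stmt13Aux
open Monoid Monoid.CoprodI SimpleGraph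

section Comb

variable {ι : Type} [DecidableEq ι] {M : ι → Type} [∀ i, Group (M i)] [∀ i, DecidableEq (M i)]

lemma inH_diff {i j : ι} {x y z : CoprodI M} (hxy : x ≠ y) (hxz : x ≠ z)
    (hi : inH i (x⁻¹ * y)) (hj : inH j (x⁻¹ * z)) (hij : i ≠ j) (k : ι) :
    ¬ inH k (y⁻¹ * z) := by
  have hyz : y⁻¹ * z = (x⁻¹ * y)⁻¹ * (x⁻¹ * z) := by group
  rw [hyz]
  exact two_not_inH hij (inH_inv hi) hj
    (inv_ne_one.mpr fun h => hxy (inv_mul_eq_one.mp h))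
    (fun h => hxz (inv_mul_eq_one.mp h)) k

section WithX
variable {X : SimpleGraph (Monoid.CoprodI M)}
variable (hX : ∀ x y, X.Adj x y → ∃ (i : ι) (m : M i), m ≠ 1 ∧ y = x * Monoid.CoprodI.of m)
include hX

lemma share_coset {u v : CoprodI M} (huv : u ≠ v) (W1 W2 : X.Walk u v)
    (hdisj : ∀ x, x ∈ W1.support → x ∈ W2.support → x = u ∨ x = v) :
    ∃ i, inH i (u⁻¹ * v) := by
  by_contra h
  push_neg at h
  obtain ⟨z, hzu, hzv, hall⟩ := cut_lemma hX huv h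
  rcases hdisj z (hall W1) (hall W2) with rfl | rfl
  · exact hzu rfl
  · exact hzv rfl

end WithX

lemma K5_onecoset (u : Fin 5 → CoprodI M) (hinj : Function.Injective u)
    (hsh : ∀ a b, a ≠ b → ∃ i, inH i ((u a)⁻¹ * u b)) :
    ∃ i, ∀ a b, inH i ((u a)⁻¹ * u b) := by
  obtain ⟨i₀, h01⟩ := hsh 0 1 (by decide)
  have key : ∀ b, b ≠ 0 → inH i₀ ((u 0)⁻¹ * u b) := by
    intro b hb
    obtain ⟨j, h0b⟩ := hsh 0 b (Ne.symm hb)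
    by_cases hj : j = i₀
    · exact hj ▸ h0b
    by_cases hb1 : b = 1
    · subst hb1
      exfalso
      have := inH_unique h01 h0b (fun h => hj h.symm)
      exact hinj.ne (show (0 : Fin 5) ≠ 1 by decide) (inv_mul_eq_one.mp this)
    · exfalso
      obtain ⟨k, h1b⟩ := hsh 1 b (fun h => hb1 h.symm)
      exact inH_diff (hinj.ne (show (0 : Fin 5) ≠ 1 by decide))
        (hinj.ne (Ne.symm hb)) h01 h0b (fun h => hj h.symm) k h1b
  have all : ∀ a, inH i₀ ((u 0)⁻¹ * u a) := by
    intro a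
    by_cases ha : a = 0
    · subst ha; rw [inv_mul_cancel]; exact inH_one i₀
    · exact key a ha
  refine ⟨i₀, fun a b => ?_⟩
  have : (u a)⁻¹ * u b = ((u 0)⁻¹ * u a)⁻¹ * ((u 0)⁻¹ * u b) := by group
  rw [this]
  exact inH_mul (inH_inv (all a)) (all b)

lemma K33_row_const (u w : Fin 3 → CoprodI M)
    (hdist : ∀ a b, u a ≠ w b) (hu : Function.Injective u) (hw : Function.Injective w)
    (hsh : ∀ a b, ∃ i, inH i ((u a)⁻¹ * w b))
    {a b b' : Fin 3} {i j : ι} (hbb' : b ≠ b')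
    (hi : inH i ((u a)⁻¹ * w b)) (hj : inH j ((u a)⁻¹ * w b')) (hij : i ≠ j) : False := by
  -- pick a' ≠ a
  set a' : Fin 3 := if a = 0 then 1 else 0 with ha'
  have haa' : a ≠ a' := by
    rw [ha']; split <;> simp_all <;> omega
  obtain ⟨i', hi'⟩ := hsh a' b
  obtain ⟨j', hj'⟩ := hsh a' b'
  -- w b⁻¹ * w b' is a reduced 2-letter word
  have hwbb : ∀ k, ¬ inH k ((w b)⁻¹ * w b') :=
    inH_diff (hdist a b) (hdist a b') hi hj hij
  have hne1 : ∀ (c : Fin 3) (d : Fin 3), (u c)⁻¹ * w d ≠ 1 :=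
    fun c d h => hdist c d (inv_mul_eq_one.mp h)
  have hij' : i' ≠ j' := by
    intro h
    subst h
    exact hwbb i' (by
      have : (w b)⁻¹ * w b' = ((u a')⁻¹ * w b)⁻¹ * ((u a')⁻¹ * w b') := by group
      rw [this]
      exact inH_mul (inH_inv hi') hj')
  -- u a⁻¹ * u a' two expressions
  have hexp1 : (u a)⁻¹ * u a' = ((u a)⁻¹ * w b) * ((u a')⁻¹ * w b)⁻¹ := by group
  have hexp2 : (u a)⁻¹ * u a' = ((u a)⁻¹ * w b') * ((u a')⁻¹ * w b')⁻¹ := by group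
  by_cases hii : i = i'
  · subst hii
    by_cases hjj : j = j'
    · subst hjj
      have h1 : inH i ((u a)⁻¹ * u a') := hexp1 ▸ inH_mul hi (inH_inv hi')
      have h2 : inH j ((u a)⁻¹ * u a') := hexp2 ▸ inH_mul hj (inH_inv hj')
      exact hu.ne haa' (inv_mul_eq_one.mp (inH_unique h1 h2 hij))
    · have h1 : inH i ((u a)⁻¹ * u a') := hexp1 ▸ inH_mul hi (inH_inv hi')
      have h2 := two_not_inH hjj hj (inH_inv hj') (hne1 a b') (inv_ne_one.mpr (hne1 a' b')) i
      rw [← hexp2] at h2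
      exact h2 h1
  · by_cases hjj : j = j'
    · subst hjj
      have h1 : inH j ((u a)⁻¹ * u a') := hexp2 ▸ inH_mul hj (inH_inv hj')
      have h2 := two_not_inH hii hi (inH_inv hi') (hne1 a b) (inv_ne_one.mpr (hne1 a' b)) j
      rw [← hexp1] at h2
      exact h2 h1
    · have := two_eq_two hii hjj hi (inH_inv hi') hj (inH_inv hj')
        (hne1 a b) (inv_ne_one.mpr (hne1 a' b)) (hne1 a b') (inv_ne_one.mpr (hne1 a' b'))
        (hexp1.symm.trans hexp2)
      exact hij this.1

lemma K33_onecoset (u w : Fin 3 → CoprodI M)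
    (hdist : ∀ a b, u a ≠ w b) (hu : Function.Injective u) (hw : Function.Injective w)
    (hsh : ∀ a b, ∃ i, inH i ((u a)⁻¹ * w b)) :
    ∃ i, ∀ a b, inH i ((u a)⁻¹ * w b) := by
  have hne1 : ∀ (c : Fin 3) (d : Fin 3), (u c)⁻¹ * w d ≠ 1 :=
    fun c d h => hdist c d (inv_mul_eq_one.mp h)
  -- each row has a constant type
  have hτ : ∀ a, ∃ i, ∀ b, inH i ((u a)⁻¹ * w b) := by
    intro a
    obtain ⟨i, hi⟩ := hsh a 0
    refine ⟨i, fun b => ?_⟩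
    by_cases hb : b = 0
    · subst hb; exact hi
    obtain ⟨j, hj⟩ := hsh a b
    by_cases hji : j = i
    · exact hji ▸ hj
    · exact absurd (K33_row_const u w hdist hu hw hsh (Ne.symm hb) hi hj
        (fun h => hji h.symm)) not_false
  choose τ hτ using hτ
  refine ⟨τ 0, fun a b => ?_⟩
  by_cases ha : τ a = τ 0
  · exact ha ▸ hτ a b
  -- rows 0 and a have different types: contradiction
  exfalso
  by_cases ha0 : a = 0
  · exact ha (by rw [ha0])
  have h00 := hτ 0 0
  have h01 := hτ 0 1
  have ha0' := hτ a 0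
  have ha1 := hτ a 1
  -- two expressions for (u 0)⁻¹ * u a
  have hexp1 : (u 0)⁻¹ * u a = ((u 0)⁻¹ * w 0) * ((u a)⁻¹ * w 0)⁻¹ := by group
  have hexp2 : (u 0)⁻¹ * u a = ((u 0)⁻¹ * w 1) * ((u a)⁻¹ * w 1)⁻¹ := by group
  have := two_eq_two (fun h => ha h.symm) (fun h => ha h.symm)
    h00 (inH_inv ha0') h01 (inH_inv ha1)
    (hne1 0 0) (inv_ne_one.mpr (hne1 a 0)) (hne1 0 1) (inv_ne_one.mpr (hne1 a 1))
    (hexp1.symm.trans hexp2)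
  exact hw.ne (show (0 : Fin 3) ≠ 1 by decide) (mul_left_cancel this.2.2.1)
end Comb
end Stmt13Aux

namespace Stmt13Aux
open Monoid Monoid.CoprodI SimpleGraph
open scoped commutatorElement

section Setup

variable {V : Type} (Γ : SimpleGraph V) (o : V → ℕ) (A B : Set V)

lemma gp_of_pow {α : Type} (Γ' : SimpleGraph α) (o' : α → ℕ) (v : α) :
    (PresentedGroup.of v : GraphProduct Γ' o') ^ o' v = 1 := by
  have h1 : (FreeGroup.of v) ^ (o' v) ∈ graphProductRels Γ' o' := Or.inl ⟨v, rfl⟩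
  have h2 : PresentedGroup.mk _ ((FreeGroup.of v) ^ (o' v)) = 1 :=
    (QuotientGroup.eq_one_iff _).mpr (Subgroup.subset_normalClosure h1)
  rw [map_pow] at h2
  exact h2

lemma gp_comm {α : Type} (Γ' : SimpleGraph α) (o' : α → ℕ) {v w : α} (h : Γ'.Adj v w) :
    ⁅(PresentedGroup.of v : GraphProduct Γ' o'), (PresentedGroup.of w : GraphProduct Γ' o')⁆
      = 1 := by
  have h1 : ⁅FreeGroup.of v, FreeGroup.of w⁆ ∈ graphProductRels Γ' o' := Or.inr ⟨v, w, h, rfl⟩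
  have h2 : PresentedGroup.mk _ ⁅FreeGroup.of v, FreeGroup.of w⁆ = 1 :=
    (QuotientGroup.eq_one_iff _).mpr (Subgroup.subset_normalClosure h1)
  rw [map_commutatorElement] at h2
  exact h2

/-- the parts as a `Bool`-indexed family of sets -/
def SS : Bool → Set V := fun b => cond b A B

/-- the two factor graph products -/
def Fam (b : Bool) : Type := GraphProduct (Γ.induce (SS A B b)) (fun v => o ↑v)

instance (b : Bool) : Group (Fam Γ o A B b) :=
  inferInstanceAs (Group (GraphProduct _ _))

/-- generator inclusion into a factor -/
def genF (b : Bool) (x : ↥(SS A B b)) : Fam Γ o A B b := PresentedGroup.of x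

variable [DecidablePred (· ∈ A)]
variable (hU : A ∪ B = Set.univ) (hI : A ∩ B = ∅)

lemma mem_B_of_not_mem_A (hv : ∀ v : V, v ∈ A ∪ B) {v : V} (h : v ∉ A) : v ∈ B :=
  (Set.mem_union _ _ _).mp (hv v) |>.resolve_left h

/-- the standard generators of the free product of the two factors -/
def genK (hv : ∀ v : V, v ∈ A ∪ B) (v : V) : CoprodI (Fam Γ o A B) :=
  if h : v ∈ A then
    CoprodI.of (genF Γ o A B true ⟨v, h⟩)
  else
    CoprodI.of (genF Γ o A B false ⟨v, mem_B_of_not_mem_A A B hv h⟩)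

lemma genK_spec (hv : ∀ v : V, v ∈ A ∪ B) (v : V) :
    ∃ (b : Bool) (x : ↥(SS A B b)), (x : V) = v ∧
      genK Γ o A B hv v = CoprodI.of (genF Γ o A B b x) := by
  unfold genK
  split
  next h => exact ⟨true, ⟨v, h⟩, rfl, rfl⟩
  next h => exact ⟨false, ⟨v, mem_B_of_not_mem_A A B hv h⟩, rfl, rfl⟩

variable (hE : ∀ a ∈ A, ∀ b ∈ B, ¬ Γ.Adj a b)

lemma rels_genK (hv : ∀ v : V, v ∈ A ∪ B) (hI : A ∩ B = ∅)
    (hE : ∀ a ∈ A, ∀ b ∈ B, ¬ Γ.Adj a b) :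
    ∀ r ∈ graphProductRels Γ o, FreeGroup.lift (genK Γ o A B hv) r = 1 := by
  have hAB : ∀ v, v ∈ A → v ∈ B → False := by
    intro v h1 h2
    have : v ∈ A ∩ B := ⟨h1, h2⟩
    rw [hI] at this
    exact this
  rintro r (⟨v, rfl⟩ | ⟨v, w, hadj, rfl⟩)
  · rw [map_pow, FreeGroup.lift_apply_of]
    unfold genK
    split
    next h =>
      rw [← map_pow]
      have he : genF Γ o A B true ⟨v, h⟩ ^ o v = 1 :=
        gp_of_pow (Γ.induce (SS A B true)) _ ⟨v, h⟩
      rw [he, map_one]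
    next h =>
      rw [← map_pow]
      have he : genF Γ o A B false ⟨v, mem_B_of_not_mem_A A B hv h⟩ ^ o v = 1 :=
        gp_of_pow (Γ.induce (SS A B false)) _ ⟨v, mem_B_of_not_mem_A A B hv h⟩
      rw [he, map_one]
  · rw [map_commutatorElement, FreeGroup.lift_apply_of, FreeGroup.lift_apply_of]
    unfold genK
    by_cases hva : v ∈ A <;> by_cases hwa : w ∈ A
    · rw [dif_pos hva, dif_pos hwa, ← map_commutatorElement]
      have : ⁅genF Γ o A B true ⟨v, hva⟩, genF Γ o A B true ⟨w, hwa⟩⁆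
          = 1 := gp_comm (Γ.induce (SS A B true)) _ (by exact hadj)
      rw [this, map_one]
    · exact absurd hadj (hE v hva w (mem_B_of_not_mem_A A B hv hwa))
    · exact absurd hadj.symm (hE w hwa v (mem_B_of_not_mem_A A B hv hva))
    · rw [dif_neg hva, dif_neg hwa, ← map_commutatorElement]
      have : ⁅genF Γ o A B false ⟨v, mem_B_of_not_mem_A A B hv hva⟩,
          genF Γ o A B false ⟨w, mem_B_of_not_mem_A A B hv hwa⟩⁆ = 1 :=
        gp_comm (Γ.induce (SS A B false)) _ (by exact hadj)
      rw [this, map_one]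

/-- the homomorphism from the graph product to the free product of the factors -/
def toK (hv : ∀ v : V, v ∈ A ∪ B) (hI : A ∩ B = ∅) (hE : ∀ a ∈ A, ∀ b ∈ B, ¬ Γ.Adj a b) :
    GraphProduct Γ o →* CoprodI (Fam Γ o A B) :=
  PresentedGroup.toGroup (rels_genK Γ o A B hv hI hE)

/-- the homomorphisms from the factors back to the graph product -/
def inc (b : Bool) : Fam Γ o A B b →* GraphProduct Γ o :=
  PresentedGroup.toGroup (f := fun x : ↥(SS A B b) => PresentedGroup.of (x : V)) (by
    rintro r (⟨x, rfl⟩ | ⟨x, y, hadj, rfl⟩)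
    · rw [map_pow, FreeGroup.lift_apply_of]
      exact gp_of_pow Γ o x
    · rw [map_commutatorElement, FreeGroup.lift_apply_of, FreeGroup.lift_apply_of]
      exact gp_comm Γ o hadj)

/-- the homomorphism from the free product back to the graph product -/
def fromK : CoprodI (Fam Γ o A B) →* GraphProduct Γ o :=
  CoprodI.lift (fun b => inc Γ o A B b)

lemma fromK_toK (hv : ∀ v : V, v ∈ A ∪ B) (hI : A ∩ B = ∅)
    (hE : ∀ a ∈ A, ∀ b ∈ B, ¬ Γ.Adj a b) :
    (fromK Γ o A B).comp (toK Γ o A B hv hI hE) = MonoidHom.id _ := by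
  apply PresentedGroup.ext
  intro x
  show fromK Γ o A B (toK Γ o A B hv hI hE (PresentedGroup.of x)) = PresentedGroup.of x
  have e1 : toK Γ o A B hv hI hE (PresentedGroup.of x) = genK Γ o A B hv x :=
    PresentedGroup.toGroup.of _
  rw [e1]
  obtain ⟨b, y, hy, hgen⟩ := genK_spec Γ o A B hv x
  rw [hgen]
  have e2 : fromK Γ o A B (CoprodI.of (genF Γ o A B b y)) =
      inc Γ o A B b (genF Γ o A B b y) := CoprodI.lift_of _ _
  rw [e2]
  have e3 : inc Γ o A B b (genF Γ o A B b y) = PresentedGroup.of (y : V) :=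
    PresentedGroup.toGroup.of _
  rw [e3, hy]

lemma toK_fromK (hv : ∀ v : V, v ∈ A ∪ B) (hI : A ∩ B = ∅)
    (hE : ∀ a ∈ A, ∀ b ∈ B, ¬ Γ.Adj a b) :
    (toK Γ o A B hv hI hE).comp (fromK Γ o A B) = MonoidHom.id _ := by
  have hAB : ∀ v, v ∈ A → v ∈ B → False := by
    intro v h1 h2
    have : v ∈ A ∩ B := ⟨h1, h2⟩
    rw [hI] at this
    exact this
  apply CoprodI.ext_hom
  intro b
  apply PresentedGroup.ext
  intro x
  show toK Γ o A B hv hI hE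
        (fromK Γ o A B (CoprodI.of (genF Γ o A B b x)))
      = CoprodI.of (genF Γ o A B b x)
  have e2 : fromK Γ o A B (CoprodI.of (genF Γ o A B b x)) =
      inc Γ o A B b (genF Γ o A B b x) := CoprodI.lift_of _ _
  have e3 : inc Γ o A B b (genF Γ o A B b x) = PresentedGroup.of (x : V) :=
    PresentedGroup.toGroup.of _
  have e1 : toK Γ o A B hv hI hE (PresentedGroup.of (x : V)) = genK Γ o A B hv (x : V) :=
    PresentedGroup.toGroup.of _
  rw [e2, e3, e1]
  unfold genK
  cases b with
  | true =>
    have hxA : (x : V) ∈ A := x.2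
    rw [dif_pos hxA]
  | false =>
    have hxB : (x : V) ∈ B := x.2
    have hxA : (x : V) ∉ A := fun h => hAB _ h hxB
    rw [dif_neg hxA]

/-- the graph product is the free product of the two factor graph products -/
def gpEquiv (hv : ∀ v : V, v ∈ A ∪ B) (hI : A ∩ B = ∅)
    (hE : ∀ a ∈ A, ∀ b ∈ B, ¬ Γ.Adj a b) :
    GraphProduct Γ o ≃* CoprodI (Fam Γ o A B) :=
  MonoidHom.toMulEquiv (toK Γ o A B hv hI hE) (fromK Γ o A B)
    (fromK_toK Γ o A B hv hI hE) (toK_fromK Γ o A B hv hI hE)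

end Setup
end Stmt13Aux

namespace Stmt13Aux
open Monoid Monoid.CoprodI SimpleGraph

section Pull

variable {V : Type} (Γ : SimpleGraph V) (o : V → ℕ) (A B : Set V)
variable [DecidablePred (· ∈ A)]
variable [∀ b : Bool, DecidableEq (Fam Γ o A B b)]

/-- the Cayley graph of the free product w.r.t. the standard generators -/
def CayK (hv : ∀ v : V, v ∈ A ∪ B) : SimpleGraph (CoprodI (Fam Γ o A B)) :=
  cayleyGraph _ (Set.range (genK Γ o A B hv))

lemma CayK_hX (hv : ∀ v : V, v ∈ A ∪ B) : ∀ x y, (CayK Γ o A B hv).Adj x y →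
    ∃ (i : Bool) (m : Fam Γ o A B i), m ≠ 1 ∧ y = x * CoprodI.of m := by
  intro x y hadj
  rw [CayK, cayleyGraph, SimpleGraph.fromRel_adj] at hadj
  obtain ⟨hne, h | h⟩ := hadj
  · obtain ⟨s, ⟨v, rfl⟩, rfl⟩ := h
    obtain ⟨b, xx, hxx, hgen⟩ := genK_spec Γ o A B hv v
    refine ⟨b, genF Γ o A B b xx, ?_, by rw [hgen]⟩
    intro h1
    exact hne (by rw [hgen, h1, map_one, mul_one])
  · obtain ⟨s, ⟨v, rfl⟩, rfl⟩ := h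
    obtain ⟨b, xx, hxx, hgen⟩ := genK_spec Γ o A B hv v
    refine ⟨b, (genF Γ o A B b xx)⁻¹, ?_, ?_⟩
    · intro h1
      rw [inv_eq_one] at h1
      exact hne (by rw [hgen, h1, map_one, mul_one])
    · rw [map_inv, hgen]
      group
  
/-- the retraction of one factor onto a chosen one -/
def rfam (b₀ b : Bool) : Fam Γ o A B b →* Fam Γ o A B b₀ :=
  if h : b = b₀ then h ▸ MonoidHom.id _ else 1

/-- the retraction of the free product onto a factor -/
def retr (b₀ : Bool) : CoprodI (Fam Γ o A B) →* Fam Γ o A B b₀ :=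
  CoprodI.lift (rfam Γ o A B b₀)

lemma retr_of_same (b₀ : Bool) (x : Fam Γ o A B b₀) :
    retr Γ o A B b₀ (CoprodI.of x) = x := by
  rw [retr, CoprodI.lift_of, rfam, dif_pos rfl]
  rfl

/-- the coset of the factor `b₀` through `u₀` -/
def cosetC (b₀ : Bool) (u₀ : CoprodI (Fam Γ o A B)) : Set (CoprodI (Fam Γ o A B)) :=
  {x | inH b₀ (u₀⁻¹ * x)}

/-- projection onto the factor `b₀`, normalized at `u₀` -/
def sigmaMap (b₀ : Bool) (u₀ : CoprodI (Fam Γ o A B)) :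
    CoprodI (Fam Γ o A B) → Fam Γ o A B b₀ :=
  fun x => retr Γ o A B b₀ (u₀⁻¹ * x)

/-- the Cayley graph of the free product restricted to a coset -/
def Gres (hv : ∀ v : V, v ∈ A ∪ B) (b₀ : Bool) (u₀ : CoprodI (Fam Γ o A B)) :
    SimpleGraph (CoprodI (Fam Γ o A B)) where
  Adj x y := (CayK Γ o A B hv).Adj x y ∧ x ∈ cosetC Γ o A B b₀ u₀ ∧ y ∈ cosetC Γ o A B b₀ u₀
  symm := ⟨by rintro x y ⟨h, hx, hy⟩; exact ⟨h.symm, hy, hx⟩⟩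
  loopless := ⟨by rintro x ⟨h, -, -⟩; exact (CayK Γ o A B hv).loopless.irrefl x h⟩

lemma sigma_injOn (b₀ : Bool) (u₀ : CoprodI (Fam Γ o A B)) :
    ∀ x ∈ cosetC Γ o A B b₀ u₀, ∀ y ∈ cosetC Γ o A B b₀ u₀,
      sigmaMap Γ o A B b₀ u₀ x = sigmaMap Γ o A B b₀ u₀ y → x = y := by
  intro x hx y hy hxy
  obtain ⟨m, hm⟩ := hx
  obtain ⟨m', hm'⟩ := hy
  simp only [sigmaMap] at hxy
  rw [hm, hm', retr_of_same, retr_of_same] at hxy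
  subst hxy
  exact mul_left_cancel (hm.trans hm'.symm)

lemma sigma_adj (hv : ∀ v : V, v ∈ A ∪ B) (b₀ : Bool) (u₀ : CoprodI (Fam Γ o A B)) :
    ∀ {x y : CoprodI (Fam Γ o A B)}, (Gres Γ o A B hv b₀ u₀).Adj x y →
      (cayleyGraphGP (Γ.induce (SS A B b₀)) (fun v => o ↑v)).Adj
        (sigmaMap Γ o A B b₀ u₀ x) (sigmaMap Γ o A B b₀ u₀ y) := by
  intro x y hGadj
  obtain ⟨hadj, hx, hy⟩ := hGadj
  have hne : x ≠ y := (CayK Γ o A B hv).ne_of_adj hadj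
  have hσne : sigmaMap Γ o A B b₀ u₀ x ≠ sigmaMap Γ o A B b₀ u₀ y :=
    fun h => hne (sigma_injOn Γ o A B b₀ u₀ x hx y hy h)
  have hd : inH b₀ (x⁻¹ * y) := by
    have hh : x⁻¹ * y = (u₀⁻¹ * x)⁻¹ * (u₀⁻¹ * y) := by group
    rw [hh]
    exact inH_mul (inH_inv hx) hy
  have hd1 : x⁻¹ * y ≠ 1 := fun h => hne (inv_mul_eq_one.mp h)
  rw [CayK, cayleyGraph, SimpleGraph.fromRel_adj] at hadj
  obtain ⟨-, h | h⟩ := hadj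
  · obtain ⟨s, ⟨v, rfl⟩, rfl⟩ := h
    obtain ⟨b, xx, hxx, hgen⟩ := genK_spec Γ o A B hv v
    have hb : b = b₀ := by
      by_contra hbb
      have h1 : inH b (x⁻¹ * (x * genK Γ o A B hv v)) :=
        ⟨genF Γ o A B b xx, by rw [hgen]; group⟩
      exact hd1 (inH_unique h1 hd hbb)
    subst hb
    have hσy : sigmaMap Γ o A B b u₀ (x * genK Γ o A B hv v) =
        sigmaMap Γ o A B b u₀ x * genF Γ o A B b xx := by
      simp only [sigmaMap]
      rw [hgen]
      rw [show u₀⁻¹ * (x * CoprodI.of (genF Γ o A B b xx)) =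
        (u₀⁻¹ * x) * CoprodI.of (genF Γ o A B b xx) by group]
      rw [map_mul, retr_of_same]
    show (cayleyGraph _ _).Adj _ _
    erw [cayleyGraph, SimpleGraph.fromRel_adj]
    exact ⟨hσne, Or.inl ⟨genF Γ o A B b xx, ⟨xx, rfl⟩, hσy⟩⟩
  · obtain ⟨s, ⟨v, rfl⟩, hxy⟩ := h
    obtain ⟨b, xx, hxx, hgen⟩ := genK_spec Γ o A B hv v
    have hb : b = b₀ := by
      by_contra hbb
      have h1 : inH b (y⁻¹ * x) := ⟨genF Γ o A B b xx, by rw [← hgen, hxy]; group⟩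
      have h2 : inH b (x⁻¹ * y) := by
        have hh : x⁻¹ * y = (y⁻¹ * x)⁻¹ := by group
        rw [hh]
        exact inH_inv h1
      exact hd1 (inH_unique h2 hd hbb)
    subst hb
    have hσx : sigmaMap Γ o A B b u₀ x =
        sigmaMap Γ o A B b u₀ y * genF Γ o A B b xx := by
      simp only [sigmaMap]
      rw [hxy, hgen]
      rw [show u₀⁻¹ * (y * CoprodI.of (genF Γ o A B b xx)) =
        (u₀⁻¹ * y) * CoprodI.of (genF Γ o A B b xx) by group]
      rw [map_mul, retr_of_same]
    show (cayleyGraph _ _).Adj _ _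
    erw [cayleyGraph, SimpleGraph.fromRel_adj]
    exact ⟨hσne, Or.inr ⟨genF Γ o A B b xx, ⟨xx, rfl⟩, hσx⟩⟩

/-- the projection as a graph homomorphism on the restricted graph -/
def psiHom (hv : ∀ v : V, v ∈ A ∪ B) (b₀ : Bool) (u₀ : CoprodI (Fam Γ o A B)) :
    Gres Γ o A B hv b₀ u₀ →g cayleyGraphGP (Γ.induce (SS A B b₀)) (fun v => o ↑v) :=
  ⟨sigmaMap Γ o A B b₀ u₀, fun h => sigma_adj Γ o A B hv b₀ u₀ h⟩

lemma pullback (hv : ∀ v : V, v ∈ A ∪ B)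
    (b₀ : Bool) {W : Type} {Hg : SimpleGraph W}
    (f : W ↪ CoprodI (Fam Γ o A B))
    (p : ∀ {a b : W}, Hg.Adj a b → (CayK Γ o A B hv).Walk (f a) (f b))
    (hpath : ∀ {a b : W} (h : Hg.Adj a b), (p h).IsPath)
    (hrev : ∀ {a b : W} (h : Hg.Adj a b), p h.symm = (p h).reverse)
    (hbranch : ∀ {a b : W} (h : Hg.Adj a b) (c : W), f c ∈ (p h).support → c = a ∨ c = b)
    (hdisj : ∀ {a b c d : W} (h₁ : Hg.Adj a b) (h₂ : Hg.Adj c d), s(a, b) ≠ s(c, d) →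
      ∀ x, x ∈ (p h₁).support → x ∈ (p h₂).support → ∃ w : W, x = f w)
    (u₀ : CoprodI (Fam Γ o A B)) (hC : ∀ w : W, inH b₀ (u₀⁻¹ * f w)) :
    ContainsSubdivision (cayleyGraphGP (Γ.induce (SS A B b₀)) (fun v => o ↑v)) Hg := by
  classical
  have hsupp : ∀ {a b : W} (h : Hg.Adj a b), ∀ x ∈ (p h).support,
      x ∈ cosetC Γ o A B b₀ u₀ := by
    intro a b h x hx
    have hab : inH b₀ ((f a)⁻¹ * f b) := by
      have hh : (f a)⁻¹ * f b = (u₀⁻¹ * f a)⁻¹ * (u₀⁻¹ * f b) := by group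
      rw [hh]
      exact inH_mul (inH_inv (hC a)) (hC b)
    have hx' := excursion (CayK_hX Γ o A B hv) (p h) (hpath h) b₀ hab x hx
    show inH b₀ (u₀⁻¹ * x)
    have hexp : u₀⁻¹ * x = (u₀⁻¹ * f a) * ((f a)⁻¹ * x) := by group
    rw [hexp]
    exact inH_mul (hC a) hx'
  have hinj := sigma_injOn Γ o A B b₀ u₀
  have hedge : ∀ {a b : W} (h : Hg.Adj a b), ∀ e ∈ (p h).edges,
      e ∈ (Gres Γ o A B hv b₀ u₀).edgeSet := by
    intro a b h e he
    induction e with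
    | h c d =>
      refine ⟨(p h).edges_subset_edgeSet he, ?_, ?_⟩
      · exact hsupp h c ((p h).fst_mem_support_of_mem_edges he)
      · exact hsupp h d ((p h).snd_mem_support_of_mem_edges he)
  have hcongr : ∀ {x y : CoprodI (Fam Γ o A B)} (w₁ w₂ : (CayK Γ o A B hv).Walk x y) (h₁ h₂),
      w₁ = w₂ → w₁.transfer (Gres Γ o A B hv b₀ u₀) h₁ = w₂.transfer (Gres Γ o A B hv b₀ u₀) h₂ := by
    rintro x y w₁ w₂ h₁ h₂ rfl
    rfl
  have hfinj : Function.Injective (fun w => sigmaMap Γ o A B b₀ u₀ (f w)) := by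
    intro a b hab
    exact f.injective (hinj (f a) (hC a) (f b) (hC b) hab)
  refine ⟨⟨fun w => sigmaMap Γ o A B b₀ u₀ (f w), hfinj⟩,
    fun {a b} h => ((p h).transfer (Gres Γ o A B hv b₀ u₀) (hedge h)).map (psiHom Γ o A B hv b₀ u₀), ?_, ?_, ?_, ?_⟩
  · intro a b h
    dsimp only
    erw [Walk.isPath_def, Walk.support_map, Walk.support_transfer]
    refine List.Nodup.map_on ?_ (hpath h).support_nodup
    intro x hx y hy hxy
    exact hinj x (hsupp h x hx) y (hsupp h y hy) hxy
  · intro a b h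
    show ((p h.symm).transfer (Gres Γ o A B hv b₀ u₀) (hedge h.symm)).map
        (psiHom Γ o A B hv b₀ u₀)
      = (((p h).transfer (Gres Γ o A B hv b₀ u₀) (hedge h)).map
        (psiHom Γ o A B hv b₀ u₀)).reverse
    rw [Walk.reverse_map]
    congr 1
    rw [Walk.reverse_transfer]
    exact hcongr _ _ _ _ (hrev h)
  · intro a b h c hc
    dsimp only at hc
    erw [Walk.support_map, Walk.support_transfer] at hc
    obtain ⟨x, hx, hex⟩ := List.mem_map.mp hc
    have hfc : f c = x := hinj (f c) (hC c) x (hsupp h x hx) hex.symm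
    exact hbranch h c (hfc ▸ hx)
  · intro a b c d h₁ h₂ hne x hx₁ hx₂
    dsimp only at hx₁ hx₂
    erw [Walk.support_map, Walk.support_transfer] at hx₁ hx₂
    obtain ⟨y₁, hy₁, hey₁⟩ := List.mem_map.mp hx₁
    obtain ⟨y₂, hy₂, hey₂⟩ := List.mem_map.mp hx₂
    have hyy : y₁ = y₂ :=
      hinj y₁ (hsupp h₁ y₁ hy₁) y₂ (hsupp h₂ y₂ hy₂) (hey₁.trans hey₂.symm)
    obtain ⟨w, hw⟩ := hdisj h₁ h₂ hne y₁ hy₁ (hyy ▸ hy₂)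
    exact ⟨w, by rw [← hey₁, hw]; rfl⟩

end Pull
end Stmt13Aux

open Stmt13Aux Monoid Monoid.CoprodI SimpleGraph in
/-- Let `Γ` be a finite graph product graph of finite cyclic groups which is the disjoint union
of two induced subgraphs `Γ₁ = Γ[A]`, `Γ₂ = Γ[B]` with no edges between them. If the Cayley
graphs of `G(Γ₁)` and `G(Γ₂)` are planar, then the Cayley graph of `G(Γ)` is planar. -/
theorem stmt_13 {V : Type} [Finite V] (Γ : SimpleGraph V) (o : V → ℕ) (ho : ∀ v, 2 ≤ o v)
    (A B : Set V) (hU : A ∪ B = Set.univ) (hI : A ∩ B = ∅)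
    (hE : ∀ a ∈ A, ∀ b ∈ B, ¬ Γ.Adj a b)
    (h₁ : IsPlanar (cayleyGraphGP (Γ.induce A) (fun v => o v)))
    (h₂ : IsPlanar (cayleyGraphGP (Γ.induce B) (fun v => o v))) :
    IsPlanar (cayleyGraphGP Γ o) := by
  letI : DecidablePred (· ∈ A) := Classical.decPred _
  letI : ∀ b : Bool, DecidableEq (Fam Γ o A B b) := fun b => Classical.decEq _
  have hv : ∀ v : V, v ∈ A ∪ B := fun v => by rw [hU]; exact Set.mem_univ v
  have himg : (⇑(gpEquiv Γ o A B hv hI hE) ''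
        Set.range (PresentedGroup.of : V → GraphProduct Γ o))
      = Set.range (genK Γ o A B hv) := by
    erw [← Set.range_comp]
    have hfun : (⇑(gpEquiv Γ o A B hv hI hE) ∘ (PresentedGroup.of : V → GraphProduct Γ o))
        = genK Γ o A B hv := by
      funext v
      show toK Γ o A B hv hI hE (PresentedGroup.of v) = genK Γ o A B hv v
      exact PresentedGroup.toGroup.of (rels_genK Γ o A B hv hI hE)
    rw [hfun]
  have hX := CayK_hX Γ o A B hv
  refine ⟨?_, ?_⟩
  · -- no K5 subdivision
    intro hcon
    have hK : ContainsSubdivision (CayK Γ o A B hv) (completeGraph (Fin 5)) := by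
      unfold CayK
      rw [← himg]
      exact containsSubdivision_map (cayleyIso (gpEquiv Γ o A B hv hI hE) _) hcon
    obtain ⟨f, p, hpath, hrev, hbranch, hdisj⟩ := hK
    have hthird : ∀ a b : Fin 5, ∃ c, c ≠ a ∧ c ≠ b := by decide
    have hadjK : ∀ {a b : Fin 5}, a ≠ b → (completeGraph (Fin 5)).Adj a b := by
      intro a b hab
      exact hab
    have hsh : ∀ a b : Fin 5, a ≠ b → ∃ i, inH i ((f a)⁻¹ * f b) := by
      intro a b hab
      obtain ⟨c, hca, hcb⟩ := hthird a b
      have hab' := hadjK hab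
      have hac := hadjK (Ne.symm hca)
      have hcb' := hadjK hcb
      refine share_coset hX (f.injective.ne hab) (p hab')
        ((p hac).append (p hcb')) ?_
      intro x hx1 hx2
      rw [Walk.mem_support_append_iff] at hx2
      have hs1 : s(a, b) ≠ s(a, c) := by
        intro hcon2
        rcases Sym2.eq_iff.mp hcon2 with ⟨-, h⟩ | ⟨h, -⟩
        · exact hcb h.symm
        · exact hca h.symm
      have hs2 : s(a, b) ≠ s(c, b) := by
        intro hcon2
        rcases Sym2.eq_iff.mp hcon2 with ⟨h, -⟩ | ⟨h, -⟩
        · exact hca h.symm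
        · exact hab h
      rcases hx2 with hx2 | hx2
      · obtain ⟨w, rfl⟩ := hdisj hab' hac hs1 x hx1 hx2
        rcases hbranch hab' w hx1 with rfl | rfl
        · exact Or.inl rfl
        · exact Or.inr rfl
      · obtain ⟨w, rfl⟩ := hdisj hab' hcb' hs2 x hx1 hx2
        rcases hbranch hab' w hx1 with rfl | rfl
        · exact Or.inl rfl
        · exact Or.inr rfl
    obtain ⟨i₀, hall⟩ := K5_onecoset (fun a => f a) f.injective hsh
    have hsub := pullback Γ o A B hv i₀ f p hpath hrev hbranch hdisj (f 0)
      (fun w => hall 0 w)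
    cases i₀ with
    | true => exact h₁.1 hsub
    | false => exact h₂.1 hsub
  · -- no K33 subdivision
    intro hcon
    have hK : ContainsSubdivision (CayK Γ o A B hv)
        (completeBipartiteGraph (Fin 3) (Fin 3)) := by
      unfold CayK
      rw [← himg]
      exact containsSubdivision_map (cayleyIso (gpEquiv Γ o A B hv hI hE) _) hcon
    obtain ⟨f, p, hpath, hrev, hbranch, hdisj⟩ := hK
    have hsnd : ∀ a : Fin 3, ∃ a', a' ≠ a := by decide
    have hLR : ∀ (x y : Fin 3),
        (completeBipartiteGraph (Fin 3) (Fin 3)).Adj (Sum.inl x) (Sum.inr y) := by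
      intro x y
      simp [completeBipartiteGraph]
    have hsh : ∀ a b : Fin 3, ∃ i, inH i ((f (Sum.inl a))⁻¹ * f (Sum.inr b)) := by
      intro a b
      obtain ⟨a', ha'⟩ := hsnd a
      obtain ⟨b', hb'⟩ := hsnd b
      have h0 := hLR a b
      have h1 := hLR a b'
      have h2 := (hLR a' b').symm
      have h3 := hLR a' b
      refine share_coset hX (f.injective.ne (by simp)) (p h0)
        ((p h1).append ((p h2).append (p h3))) ?_
      intro x hx1 hx2
      rw [Walk.mem_support_append_iff] at hx2
      rcases hx2 with hx2 | hx2
      · have hs : s(Sum.inl a, Sum.inr b) ≠ (s(Sum.inl a, Sum.inr b') :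
            Sym2 (Fin 3 ⊕ Fin 3)) := by
          intro hcon2
          rcases Sym2.eq_iff.mp hcon2 with ⟨-, h⟩ | ⟨h, -⟩
          · exact hb' (Sum.inr.inj h).symm
          · exact Sum.inl_ne_inr h
        obtain ⟨w, rfl⟩ := hdisj h0 h1 hs x hx1 hx2
        rcases hbranch h0 w hx1 with rfl | rfl
        · exact Or.inl rfl
        · exact Or.inr rfl
      rw [Walk.mem_support_append_iff] at hx2
      rcases hx2 with hx2 | hx2
      · have hs : s(Sum.inl a, Sum.inr b) ≠ (s(Sum.inr b', Sum.inl a') :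
            Sym2 (Fin 3 ⊕ Fin 3)) := by
          intro hcon2
          rcases Sym2.eq_iff.mp hcon2 with ⟨h, -⟩ | ⟨h, -⟩
          · exact Sum.inl_ne_inr h
          · exact ha' (Sum.inl.inj h).symm
        obtain ⟨w, rfl⟩ := hdisj h0 h2 hs x hx1 hx2
        rcases hbranch h0 w hx1 with rfl | rfl
        · exact Or.inl rfl
        · exact Or.inr rfl
      · have hs : s(Sum.inl a, Sum.inr b) ≠ (s(Sum.inl a', Sum.inr b) :
            Sym2 (Fin 3 ⊕ Fin 3)) := by
          intro hcon2
          rcases Sym2.eq_iff.mp hcon2 with ⟨h, -⟩ | ⟨h, -⟩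
          · exact ha' (Sum.inl.inj h).symm
          · exact Sum.inl_ne_inr h
        obtain ⟨w, rfl⟩ := hdisj h0 h3 hs x hx1 hx2
        rcases hbranch h0 w hx1 with rfl | rfl
        · exact Or.inl rfl
        · exact Or.inr rfl
    obtain ⟨i₀, hall⟩ := K33_onecoset (fun a => f (Sum.inl a)) (fun b => f (Sum.inr b))
      (fun a b => f.injective.ne (by simp))
      (fun a b hab => by
        have := f.injective hab
        simpa using this)
      (fun a b hab => by
        have := f.injective hab
        simpa using this)
      hsh
    have hC : ∀ c : Fin 3 ⊕ Fin 3, inH i₀ ((f (Sum.inl 0))⁻¹ * f c) := by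
      intro c
      cases c with
      | inl a =>
        have hexp : (f (Sum.inl 0))⁻¹ * f (Sum.inl a) =
            ((f (Sum.inl 0))⁻¹ * f (Sum.inr 0)) *
              ((f (Sum.inl a))⁻¹ * f (Sum.inr 0))⁻¹ := by group
        rw [hexp]
        exact inH_mul (hall 0 0) (inH_inv (hall a 0))
      | inr b => exact hall 0 b
    have hsub := pullback Γ o A B hv i₀ f p hpath hrev hbranch hdisj (f (Sum.inl 0)) hC
    cases i₀ with
    | true => exact h₁.2 hsub
    | false => exact h₂.2 hsub
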